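/- (Characterization of the KdV reality condition.) Let (ξ_j)_{j∈ℤ} be a finitely supported family of trace-free real 2×2 matrices, written ξ_j = [[A_j, B_j],[C_j, −A_j]], and let φ(λ) = [[1, λ],[0, 1]]. Then the identity φ(λ)⁻¹·(Σ_j ξ_j λ^j)·φ(λ) = φ(−λ)⁻¹·(Σ_j ξ_j (−λ)^j)·φ(−λ) holds for all real λ ≠ 0 if and only if for every j ∈ ℤ one has C_{2j+1} = 0, A_{2j+1} = C_{2j}, and B_{2j+1} = −2A_{2j}. -/

import Mathlib

open Matrix Function
private lemma laurent_vanish (f : ℤ → ℝ) (hf : (Function.support f).Finite)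
    (h : ∀ t : ℝ, t ≠ 0 → ∑ᶠ j : ℤ, t ^ j * f j = 0) : ∀ j, f j = 0 := by
  intro j0
  by_contra hj0
  classical
  set s : Finset ℤ := hf.toFinset with hs
  have hj0s : j0 ∈ s := hf.mem_toFinset.2 hj0
  set N : ℕ := s.sup fun j => j.natAbs with hN
  have hge : ∀ j ∈ s, (0:ℤ) ≤ j + N := by
    intro j hj
    have h1 : (j.natAbs : ℤ) ≤ N := by exact_mod_cast Finset.le_sup (f := fun j : ℤ => j.natAbs) hj
    have h2 : -(j.natAbs : ℤ) ≤ j := by omega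
    linarith
  set P : Polynomial ℝ := ∑ j ∈ s, Polynomial.C (f j) * Polynomial.X ^ (j + N).toNat with hP
  have hsupf : ∀ t : ℝ, Function.support (fun j : ℤ => t ^ j * f j) ⊆ ↑s := by
    intro t j hj
    have hfj : f j ≠ 0 := by
      intro h0; apply hj; simp [h0]
    simpa [hs] using hfj
  have heval : ∀ t : ℝ, t ≠ 0 → P.eval t = 0 := by
    intro t ht
    have h1 : (∑ᶠ j : ℤ, t ^ j * f j) = ∑ j ∈ s, t ^ j * f j :=
      finsum_eq_sum_of_support_subset _ (hsupf t)
    have h2 : P.eval t = t ^ (N:ℤ) * ∑ j ∈ s, t ^ j * f j := by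
      rw [hP, Polynomial.eval_finset_sum, Finset.mul_sum]
      refine Finset.sum_congr rfl fun j hj => ?_
      have hge' := hge j hj
      have h3 : (t:ℝ) ^ ((j + N).toNat) = t ^ (j + (N:ℤ)) := by
        rw [← zpow_natCast, Int.toNat_of_nonneg hge']
      simp only [Polynomial.eval_mul, Polynomial.eval_C, Polynomial.eval_pow, Polynomial.eval_X,
        h3, zpow_add₀ ht]
      ring
    rw [h2, ← h1, h t ht, mul_zero]
  have hProots : Set.Infinite {x : ℝ | P.IsRoot x} := by
    refine Set.Infinite.mono ?_ ((Set.finite_singleton (0:ℝ)).infinite_compl)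
    intro x hx
    exact heval x hx
  have hP0 : P = 0 := P.eq_zero_of_infinite_isRoot hProots
  have hcoeff : P.coeff (j0 + N).toNat = f j0 := by
    rw [hP, Polynomial.finset_sum_coeff]
    rw [Finset.sum_eq_single j0]
    · simp [Polynomial.coeff_C_mul, Polynomial.coeff_X_pow]
    · intro j hj hne
      have hneq : (j0 + N).toNat ≠ (j + N).toNat := by
        intro he
        apply hne
        have h4 := congrArg (fun n : ℕ => (n:ℤ)) he
        simp only [Int.toNat_of_nonneg (hge j hj), Int.toNat_of_nonneg (hge j0 hj0s)] at h4
        omega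
      simp [Polynomial.coeff_C_mul, Polynomial.coeff_X_pow, hneq]
    · intro h'; exact absurd hj0s h'
  rw [hP0] at hcoeff
  simp only [Polynomial.coeff_zero] at hcoeff
  exact hj0 hcoeff.symm
private lemma finsum_shift (f : ℤ → ℝ) (hf : (Function.support f).Finite)
    (t : ℝ) (ht : t ≠ 0) :
    ∑ᶠ k : ℤ, t ^ k * f (k - 1) = t * ∑ᶠ k : ℤ, t ^ k * f k := by
  have hfin : (Function.support fun k : ℤ => t ^ k * f k).Finite := by
    refine hf.subset ?_
    intro k hk
    intro h0
    exact hk (by simp [h0])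
  rw [mul_finsum _ _]
  have h2 : ∀ k : ℤ, t * (t ^ k * f k) = t ^ (k+1) * f (k + 1 - 1) := by
    intro k; rw [zpow_add_one₀ ht]; ring_nf
  simp_rw [h2]
  exact (finsum_comp_equiv (Equiv.addRight (1:ℤ)) (f := fun k : ℤ => t ^ k * f (k - 1))).symm

private lemma phi_inv (t : ℝ) : (!![1, t; 0, 1])⁻¹ = !![1, -t; 0, 1] := by
  apply Matrix.inv_eq_right_inv
  ext i j
  fin_cases i <;> fin_cases j <;>
    simp [Matrix.mul_apply, Fin.sum_univ_two, Matrix.one_apply]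

private lemma conj_term (t : ℝ) (M : Matrix (Fin 2) (Fin 2) ℝ) (hd : M 1 1 = - M 0 0) :
    !![1, -t; 0, 1] * M * !![1, t; 0, 1]
      = !![M 0 0 - t * M 1 0, M 0 1 + 2 * t * M 0 0 - t ^ 2 * M 1 0;
           M 1 0, t * M 1 0 - M 0 0] := by
  ext i j
  fin_cases i <;> fin_cases j <;>
    simp [Matrix.mul_apply, Matrix.vecMul, dotProduct, Fin.sum_univ_two, hd] <;> ring

private lemma sum_entries (s : Finset ℤ) (F : ℤ → ℝ) (a b c d : ℤ → ℝ) :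
    (∑ j ∈ s, F j • !![a j, b j; c j, d j])
      = !![∑ j ∈ s, F j * a j, ∑ j ∈ s, F j * b j;
           ∑ j ∈ s, F j * c j, ∑ j ∈ s, F j * d j] := by
  ext i k
  fin_cases i <;> fin_cases k <;>
    simp [Matrix.sum_apply, Matrix.smul_apply, smul_eq_mul]

private lemma mat2_eq_iff (a b c d a' b' c' d' : ℝ) :
    (!![a, b; c, d] = !![a', b'; c', d']) ↔ (a = a' ∧ b = b' ∧ c = c' ∧ d = d') := by
  constructor
  · intro h
    refine ⟨?_, ?_, ?_, ?_⟩
    · simpa using congrFun (congrFun h 0) 0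
    · simpa using congrFun (congrFun h 0) 1
    · simpa using congrFun (congrFun h 1) 0
    · simpa using congrFun (congrFun h 1) 1
  · rintro ⟨rfl, rfl, rfl, rfl⟩; rfl

/-- Characterization of the KdV reality condition: for a finitely supported
family `(ξ_j)_{j∈ℤ}` of trace-free real `2×2` matrices `ξ_j = [[A_j,B_j],[C_j,−A_j]]` and
`φ(λ) = [[1,λ],[0,1]]`, the identity
`φ(λ)⁻¹·(Σ_j ξ_j λ^j)·φ(λ) = φ(−λ)⁻¹·(Σ_j ξ_j (−λ)^j)·φ(−λ)` holds for all real `λ ≠ 0`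
iff for every `j ∈ ℤ`: `C_{2j+1} = 0`, `A_{2j+1} = C_{2j}`, and `B_{2j+1} = −2A_{2j}`. -/
theorem stmt15 (ξ : ℤ → Matrix (Fin 2) (Fin 2) ℝ)
    (hsupp : (Function.support ξ).Finite)
    (htr : ∀ j, (ξ j).trace = 0) :
    (∀ lam : ℝ, lam ≠ 0 →
      (!![1, lam; 0, 1])⁻¹ * (∑ᶠ j : ℤ, lam ^ j • ξ j) * !![1, lam; 0, 1]
        = (!![1, -lam; 0, 1])⁻¹ * (∑ᶠ j : ℤ, (-lam) ^ j • ξ j) * !![1, -lam; 0, 1])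
    ↔
    (∀ j : ℤ,
      ξ (2 * j + 1) 1 0 = 0 ∧
      ξ (2 * j + 1) 0 0 = ξ (2 * j) 1 0 ∧
      ξ (2 * j + 1) 0 1 = -2 * ξ (2 * j) 0 0) := by
  classical
  have hD : ∀ j, ξ j 1 1 = - ξ j 0 0 := by
    intro j
    have h := htr j
    simp [Matrix.trace, Fin.sum_univ_two] at h
    linarith
  set s : Finset ℤ := hsupp.toFinset with hs
  -- auxiliary coefficient functions
  set g1 : ℤ → ℝ := fun k => (1 - (-1:ℝ) ^ k) * ξ k 1 0 with hg1
  set g2 : ℤ → ℝ := fun k => (1 - (-1:ℝ) ^ k) * (ξ k 0 0 - ξ (k - 1) 1 0) with hg2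
  set g3 : ℤ → ℝ :=
    fun k => (1 - (-1:ℝ) ^ k) * (ξ k 0 1 + 2 * ξ (k - 1) 0 0 - ξ (k - 2) 1 0) with hg3
  set u : ℤ → ℝ := fun k => (1 + (-1:ℝ) ^ k) * ξ k 1 0 with hu
  set v : ℤ → ℝ := fun k => (1 + (-1:ℝ) ^ k) * ξ k 0 0 with hv
  set b1 : ℤ → ℝ := fun k => (1 - (-1:ℝ) ^ k) * ξ k 0 0 with hb1
  set bB : ℤ → ℝ := fun k => (1 - (-1:ℝ) ^ k) * ξ k 0 1 with hbB
  -- support lemmas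
  have hfs : ∀ f : ℤ → ℝ, (∀ k, ξ k = 0 → f k = 0) → (Function.support f).Finite := by
    intro f hf
    refine hsupp.subset fun k hk => ?_
    intro h0
    exact hk (hf k h0)
  have hfm : ∀ (t : ℝ) (f : ℤ → ℝ), (Function.support f).Finite →
      (Function.support fun k : ℤ => t ^ k * f k).Finite := by
    intro t f hf
    refine hf.subset fun k hk => ?_
    intro h0
    exact hk (by simp [h0])
  have hshiftfin : ∀ (f : ℤ → ℝ) (m : ℤ), (Function.support f).Finite →
      (Function.support fun k : ℤ => f (k - m)).Finite := by
    intro f m hf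
    refine (hf.image fun x : ℤ => x + m).subset fun k hk => ?_
    exact ⟨k - m, hk, by ring⟩
  have hg1z : ∀ k, ξ k = 0 → g1 k = 0 := by intro k h0; simp [hg1, h0]
  have huz : ∀ k, ξ k = 0 → u k = 0 := by intro k h0; simp [hu, h0]
  have hvz : ∀ k, ξ k = 0 → v k = 0 := by intro k h0; simp [hv, h0]
  have hb1z : ∀ k, ξ k = 0 → b1 k = 0 := by intro k h0; simp [hb1, h0]
  have hbBz : ∀ k, ξ k = 0 → bB k = 0 := by intro k h0; simp [hbB, h0]
  have hfing1 : (Function.support g1).Finite := hfs g1 hg1z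
  have hfinu : (Function.support u).Finite := hfs u huz
  have hfinv : (Function.support v).Finite := hfs v hvz
  have hfinb1 : (Function.support b1).Finite := hfs b1 hb1z
  have hfinbB : (Function.support bB).Finite := hfs bB hbBz
  have hfing2 : (Function.support g2).Finite := by
    refine (hsupp.union ((hsupp.image fun x : ℤ => x + 1))).subset fun k hk => ?_
    by_contra hcon
    simp only [Set.mem_union, Set.mem_image, Function.mem_support, not_or, not_not,
      not_exists, not_and] at hcon
    have h1 : ξ k = 0 := hcon.1
    have h2 : ξ (k - 1) = 0 := by
      by_contra h2
      exact hcon.2 (k - 1) h2 (by ring)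
    exact hk (by simp [hg2, h1, h2])
  have hfing3 : (Function.support g3).Finite := by
    refine ((hsupp.union ((hsupp.image fun x : ℤ => x + 1))).union
      ((hsupp.image fun x : ℤ => x + 2))).subset fun k hk => ?_
    by_contra hcon
    simp only [Set.mem_union, Set.mem_image, Function.mem_support, not_or, not_not,
      not_exists, not_and] at hcon
    have h1 : ξ k = 0 := hcon.1.1
    have h2 : ξ (k - 1) = 0 := by
      by_contra h2
      exact hcon.1.2 (k - 1) h2 (by ring)
    have h3 : ξ (k - 2) = 0 := by
      by_contra h3
      exact hcon.2 (k - 2) h3 (by ring)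
    exact hk (by simp [hg3, h1, h2, h3])
  -- finsum over support-in-s functions equals finset sum
  have hfe : ∀ (t : ℝ) (f : ℤ → ℝ), (∀ k, ξ k = 0 → f k = 0) →
      ∑ᶠ k : ℤ, t ^ k * f k = ∑ j ∈ s, t ^ j * f j := by
    intro t f hf
    refine finsum_eq_sum_of_support_subset _ ?_
    rw [hs, Set.Finite.coe_toFinset]
    intro k hk
    intro h0
    exact hk (by simp [hf k h0])
  have hsum : ∀ t : ℝ, (∑ᶠ j : ℤ, t ^ j • ξ j) = ∑ j ∈ s, t ^ j • ξ j := by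
    intro t
    refine finsum_eq_sum_of_support_subset _ ?_
    rw [hs, Set.Finite.coe_toFinset]
    intro k hk
    intro h0
    exact hk (by simp [h0])
  have hneg : ∀ (t : ℝ) (j : ℤ), (-t) ^ j = (-1:ℝ) ^ j * t ^ j := by
    intro t j
    rw [show (-t : ℝ) = -1 * t by ring, mul_zpow]
  have hm1 : ∀ k : ℤ, (-1:ℝ) ^ (k - 1) = -(-1:ℝ) ^ k := by
    intro k
    rw [zpow_sub_one₀ (by norm_num : (-1:ℝ) ≠ 0)]
    norm_num
  -- main structural computation
  have hmain : ∀ t : ℝ, (!![1, t; 0, 1])⁻¹ * (∑ᶠ j : ℤ, t ^ j • ξ j) * !![1, t; 0, 1]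
      = !![∑ j ∈ s, t ^ j * (ξ j 0 0 - t * ξ j 1 0),
           ∑ j ∈ s, t ^ j * (ξ j 0 1 + 2 * t * ξ j 0 0 - t ^ 2 * ξ j 1 0);
           ∑ j ∈ s, t ^ j * ξ j 1 0,
           ∑ j ∈ s, t ^ j * (t * ξ j 1 0 - ξ j 0 0)] := by
    intro t
    rw [hsum t, phi_inv t, Finset.mul_sum, Finset.sum_mul]
    have hct : ∀ j : ℤ, !![1, -t; 0, 1] * ξ j * !![1, t; 0, 1]
        = !![ξ j 0 0 - t * ξ j 1 0, ξ j 0 1 + 2 * t * ξ j 0 0 - t ^ 2 * ξ j 1 0;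
             ξ j 1 0, t * ξ j 1 0 - ξ j 0 0] := fun j => conj_term t (ξ j) (hD j)
    simp_rw [Matrix.mul_smul, Matrix.smul_mul, hct]
    exact sum_entries s (fun j => t ^ j) _ _ _ _
  -- the three difference identities
  have c1 : ∀ lam : ℝ, lam ≠ 0 →
      (∑ j ∈ s, lam ^ j * ξ j 1 0) - (∑ j ∈ s, (-lam) ^ j * ξ j 1 0)
        = ∑ᶠ k : ℤ, lam ^ k * g1 k := by
    intro lam hlam
    rw [hfe lam g1 hg1z, ← Finset.sum_sub_distrib]
    refine Finset.sum_congr rfl fun j _ => ?_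
    rw [hneg lam j]
    simp only [hg1]
    ring
  have c2 : ∀ lam : ℝ, lam ≠ 0 →
      (∑ j ∈ s, lam ^ j * (ξ j 0 0 - lam * ξ j 1 0))
        - (∑ j ∈ s, (-lam) ^ j * (ξ j 0 0 - (-lam) * ξ j 1 0))
        = ∑ᶠ k : ℤ, lam ^ k * g2 k := by
    intro lam hlam
    have hsplit : (∑ j ∈ s, lam ^ j * (ξ j 0 0 - lam * ξ j 1 0))
        - (∑ j ∈ s, (-lam) ^ j * (ξ j 0 0 - (-lam) * ξ j 1 0))
        = (∑ j ∈ s, lam ^ j * b1 j) - lam * (∑ j ∈ s, lam ^ j * u j) := by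
      rw [Finset.mul_sum, ← Finset.sum_sub_distrib, ← Finset.sum_sub_distrib]
      refine Finset.sum_congr rfl fun j _ => ?_
      rw [hneg lam j]
      simp only [hb1, hu]
      ring
    rw [hsplit, ← hfe lam b1 hb1z, ← hfe lam u huz,
      ← finsum_shift u hfinu lam hlam,
      ← finsum_sub_distrib (hfm lam b1 hfinb1)
        (hfm lam (fun k => u (k - 1)) (hshiftfin u 1 hfinu))]
    refine finsum_congr fun k => ?_
    simp only [hg2, hb1, hu]
    rw [hm1 k]
    ring
  have c3 : ∀ lam : ℝ, lam ≠ 0 →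
      (∑ j ∈ s, lam ^ j * (ξ j 0 1 + 2 * lam * ξ j 0 0 - lam ^ 2 * ξ j 1 0))
        - (∑ j ∈ s, (-lam) ^ j * (ξ j 0 1 + 2 * (-lam) * ξ j 0 0 - (-lam) ^ 2 * ξ j 1 0))
        = ∑ᶠ k : ℤ, lam ^ k * g3 k := by
    intro lam hlam
    have hsplit : (∑ j ∈ s, lam ^ j * (ξ j 0 1 + 2 * lam * ξ j 0 0 - lam ^ 2 * ξ j 1 0))
        - (∑ j ∈ s, (-lam) ^ j * (ξ j 0 1 + 2 * (-lam) * ξ j 0 0 - (-lam) ^ 2 * ξ j 1 0))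
        = (∑ j ∈ s, lam ^ j * bB j) + 2 * (lam * (∑ j ∈ s, lam ^ j * v j))
          - lam * (lam * (∑ j ∈ s, lam ^ j * g1 j)) := by
      rw [Finset.mul_sum, Finset.mul_sum, Finset.mul_sum, Finset.mul_sum]
      rw [← Finset.sum_add_distrib, ← Finset.sum_sub_distrib, ← Finset.sum_sub_distrib]
      refine Finset.sum_congr rfl fun j _ => ?_
      rw [hneg lam j]
      simp only [hbB, hv, hg1]
      ring
    rw [hsplit, ← hfe lam bB hbBz, ← hfe lam v hvz, ← hfe lam g1 hg1z,
      ← finsum_shift v hfinv lam hlam,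
      ← finsum_shift g1 hfing1 lam hlam,
      ← finsum_shift (fun k => g1 (k - 1)) (hshiftfin g1 1 hfing1) lam hlam,
      mul_finsum _ (2:ℝ),
      ← finsum_add_distrib (hfm lam bB hfinbB) ?hv2,
      ← finsum_sub_distrib ?hadd ?hg12]
    case hv2 =>
      refine ((hshiftfin v 1 hfinv).subset ?_)
      intro k hk
      intro h0
      exact hk (by simp [h0])
    case hg12 =>
      exact hfm lam _ (hshiftfin (fun k => g1 (k - 1)) 1 (hshiftfin g1 1 hfing1))
    case hadd =>
      refine (hfinbB.union ((hshiftfin v 1 hfinv))).subset fun k hk => ?_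
      by_contra hcon
      simp only [Set.mem_union, Function.mem_support, not_or, not_not] at hcon
      exact hk (by simp [hcon.1, hcon.2])
    refine finsum_congr fun k => ?_
    simp only [hg3, hbB, hv, hg1]
    rw [hm1 (k - 1), hm1 k]
    have he2 : (k - 1 - 1 : ℤ) = k - 2 := by ring
    rw [he2]
    ring
  -- the key pointwise equivalence
  have key : ∀ lam : ℝ, lam ≠ 0 →
      (((!![1, lam; 0, 1])⁻¹ * (∑ᶠ j : ℤ, lam ^ j • ξ j) * !![1, lam; 0, 1]
          = (!![1, -lam; 0, 1])⁻¹ * (∑ᶠ j : ℤ, (-lam) ^ j • ξ j) * !![1, -lam; 0, 1])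
        ↔ ((∑ᶠ k : ℤ, lam ^ k * g1 k) = 0 ∧ (∑ᶠ k : ℤ, lam ^ k * g2 k) = 0 ∧
            (∑ᶠ k : ℤ, lam ^ k * g3 k) = 0)) := by
    intro lam hlam
    rw [hmain lam, hmain (-lam), mat2_eq_iff]
    constructor
    · rintro ⟨h00, h01, h10, -⟩
      refine ⟨?_, ?_, ?_⟩
      · rw [← c1 lam hlam]
        exact sub_eq_zero_of_eq h10
      · rw [← c2 lam hlam]
        exact sub_eq_zero_of_eq h00
      · rw [← c3 lam hlam]
        exact sub_eq_zero_of_eq h01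
    · rintro ⟨h1, h2, h3⟩
      have e10 : (∑ j ∈ s, lam ^ j * ξ j 1 0) = ∑ j ∈ s, (-lam) ^ j * ξ j 1 0 := by
        refine sub_eq_zero.mp ?_
        rw [c1 lam hlam]
        exact h1
      have e00 : (∑ j ∈ s, lam ^ j * (ξ j 0 0 - lam * ξ j 1 0))
          = ∑ j ∈ s, (-lam) ^ j * (ξ j 0 0 - (-lam) * ξ j 1 0) := by
        refine sub_eq_zero.mp ?_
        rw [c2 lam hlam]
        exact h2
      have e01 : (∑ j ∈ s, lam ^ j * (ξ j 0 1 + 2 * lam * ξ j 0 0 - lam ^ 2 * ξ j 1 0))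
          = ∑ j ∈ s, (-lam) ^ j * (ξ j 0 1 + 2 * (-lam) * ξ j 0 0 - (-lam) ^ 2 * ξ j 1 0) := by
        refine sub_eq_zero.mp ?_
        rw [c3 lam hlam]
        exact h3
      have e11 : (∑ j ∈ s, lam ^ j * (lam * ξ j 1 0 - ξ j 0 0))
          = ∑ j ∈ s, (-lam) ^ j * ((-lam) * ξ j 1 0 - ξ j 0 0) := by
        have l1 : (∑ j ∈ s, lam ^ j * (lam * ξ j 1 0 - ξ j 0 0))
            = - ∑ j ∈ s, lam ^ j * (ξ j 0 0 - lam * ξ j 1 0) := by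
          rw [← Finset.sum_neg_distrib]
          exact Finset.sum_congr rfl fun j _ => by ring
        have l2 : (∑ j ∈ s, (-lam) ^ j * ((-lam) * ξ j 1 0 - ξ j 0 0))
            = - ∑ j ∈ s, (-lam) ^ j * (ξ j 0 0 - (-lam) * ξ j 1 0) := by
          rw [← Finset.sum_neg_distrib]
          exact Finset.sum_congr rfl fun j _ => by ring
        rw [l1, l2, e00]
      exact ⟨e00, e01, e10, e11⟩
  -- put everything together
  constructor
  · intro h
    have hz1 : ∀ k, g1 k = 0 :=
      laurent_vanish g1 hfing1 fun t ht => ((key t ht).mp (h t ht)).1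
    have hz2 : ∀ k, g2 k = 0 :=
      laurent_vanish g2 hfing2 fun t ht => ((key t ht).mp (h t ht)).2.1
    have hz3 : ∀ k, g3 k = 0 :=
      laurent_vanish g3 hfing3 fun t ht => ((key t ht).mp (h t ht)).2.2
    have hC : ∀ m : ℤ, ξ (2 * m + 1) 1 0 = 0 := by
      intro m
      have h1 := hz1 (2 * m + 1)
      simp only [hg1] at h1
      rw [Odd.neg_one_zpow ⟨m, by ring⟩] at h1
      linarith
    intro j
    refine ⟨hC j, ?_, ?_⟩
    · have h2 := hz2 (2 * j + 1)
      simp only [hg2] at h2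
      rw [Odd.neg_one_zpow ⟨j, by ring⟩, show (2 * j + 1 - 1 : ℤ) = 2 * j by ring] at h2
      linarith
    · have h3 := hz3 (2 * j + 1)
      simp only [hg3] at h3
      rw [Odd.neg_one_zpow ⟨j, by ring⟩, show (2 * j + 1 - 1 : ℤ) = 2 * j by ring,
        show (2 * j + 1 - 2 : ℤ) = 2 * (j - 1) + 1 by ring, hC (j - 1)] at h3
      linarith
  · intro h lam hlam
    refine (key lam hlam).mpr ⟨?_, ?_, ?_⟩
    · refine finsum_eq_zero_of_forall_eq_zero fun k => ?_
      rcases Int.even_or_odd k with he | ⟨m, rfl⟩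
      · simp only [hg1]
        rw [Even.neg_one_zpow he]
        ring
      · simp only [hg1]
        rw [Odd.neg_one_zpow ⟨m, rfl⟩, (h m).1]
        ring
    · refine finsum_eq_zero_of_forall_eq_zero fun k => ?_
      rcases Int.even_or_odd k with he | ⟨m, rfl⟩
      · simp only [hg2]
        rw [Even.neg_one_zpow he]
        ring
      · simp only [hg2]
        rw [Odd.neg_one_zpow ⟨m, rfl⟩, show (2 * m + 1 - 1 : ℤ) = 2 * m by ring, (h m).2.1]
        ring
    · refine finsum_eq_zero_of_forall_eq_zero fun k => ?_
      rcases Int.even_or_odd k with he | ⟨m, rfl⟩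
      · simp only [hg3]
        rw [Even.neg_one_zpow he]
        ring
      · simp only [hg3]
        rw [Odd.neg_one_zpow ⟨m, rfl⟩, show (2 * m + 1 - 1 : ℤ) = 2 * m by ring,
          show (2 * m + 1 - 2 : ℤ) = 2 * (m - 1) + 1 by ring, (h (m - 1)).1, (h m).2.2]
        ring
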